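/- Let d ≥ 1 and let W₁,…,W_{d²} be d×d complex matrices that are Hermitian, unitary, and satisfy Tr(W_k W_l) = d·δ_{kl} for all k, l (as is the case for the multi-qubit Pauli matrices when d = 2ⁿ). Define Q = (1/d²) Σ_{k=1}^{d²} W_k^{⊗4}, an operator on (ℂ^d)^{⊗4}. Then for all d×d complex matrices T₁, T₂, T₃, T₄: ‖Q (T₁ ⊗ T₂ ⊗ T₃ ⊗ T₄) Q‖_F ≤ (1/d) · ‖T₁‖_F ‖T₂‖_F ‖T₃‖_F ‖T₄‖_F. -/

import Mathlib

/- STATEMENT 12: Let W₁,…,W_{d²} be Hermitian unitary d×d matrices with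
Tr(W_k W_l) = d·δ_{kl} (e.g. multi-qubit Pauli matrices) and Q = (1/d²) Σ_k W_k^{⊗4} on
(ℂ^d)^{⊗4}.  Then for all d×d matrices T₁,…,T₄:
‖Q (T₁⊗T₂⊗T₃⊗T₄) Q‖_F ≤ (1/d)·‖T₁‖_F‖T₂‖_F‖T₃‖_F‖T₄‖_F. -/

open Matrix
open scoped Kronecker

noncomputable section

def fnorm {m : Type*} [Fintype m] (M : Matrix m m ℂ) : ℝ :=
  Real.sqrt ((Mᴴ * M).trace.re)

namespace Stmt12Aux

lemma trace_re_eq {m n : Type*} [Fintype m] [Fintype n] (M : Matrix m n ℂ) :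
    ((Mᴴ * M).trace).re = ∑ i, ∑ j, Complex.normSq (M i j) := by
  simp only [Matrix.trace, Matrix.diag, Matrix.mul_apply, Matrix.conjTranspose_apply,
    Complex.re_sum, RCLike.star_def, Complex.mul_re, Complex.conj_re, Complex.conj_im,
    Complex.normSq_apply]
  rw [Finset.sum_comm]
  apply Finset.sum_congr rfl; intros; apply Finset.sum_congr rfl; intros; ring

lemma trace_re_nonneg {m n : Type*} [Fintype m] [Fintype n] (M : Matrix m n ℂ) :
    0 ≤ ((Mᴴ * M).trace).re := by
  rw [trace_re_eq]
  exact Finset.sum_nonneg fun i _ => Finset.sum_nonneg fun j _ => Complex.normSq_nonneg _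

lemma core {m n p : Type*} [Fintype m] [Fintype n] [Fintype p] [DecidableEq n] [DecidableEq m]
    (X : Matrix m n ℂ) (Z : Matrix n p ℂ) (c : ℝ) (hc : 0 < c)
    (h : X * Xᴴ = (c : ℂ) • 1) :
    (((X * Z)ᴴ * (X * Z)).trace).re ≤ c * ((Zᴴ * Z).trace).re := by
  set A : Matrix n n ℂ := (c : ℂ) • 1 - Xᴴ * X with hA
  have hPP : (Xᴴ * X) * (Xᴴ * X) = (c : ℂ) • (Xᴴ * X) := by
    calc (Xᴴ * X) * (Xᴴ * X) = Xᴴ * (X * Xᴴ) * X := by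
          simp only [Matrix.mul_assoc]
      _ = (c : ℂ) • (Xᴴ * X) := by
          rw [h]
          simp [Matrix.mul_smul, Matrix.smul_mul, Matrix.mul_assoc, Matrix.one_mul]
  have hAA : A * A = (c : ℂ) • A := by
    simp only [hA, Matrix.sub_mul, Matrix.mul_sub, Matrix.smul_mul, Matrix.mul_smul,
      Matrix.one_mul, Matrix.mul_one, hPP, smul_smul, smul_sub]
    abel
  have hAH : Aᴴ = A := by
    simp [hA, Matrix.conjTranspose_smul, Matrix.conjTranspose_mul, Complex.conj_ofReal]
  have key : ((Zᴴ * (A * Z)).trace) = (c:ℂ) * (Zᴴ * Z).trace - ((X * Z)ᴴ * (X * Z)).trace := by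
    have e1 : Zᴴ * (A * Z) = (c : ℂ) • (Zᴴ * Z) - (X * Z)ᴴ * ((X * Z)) := by
      simp only [hA, Matrix.sub_mul, Matrix.mul_sub, Matrix.smul_mul, Matrix.mul_smul,
        Matrix.one_mul, Matrix.conjTranspose_mul, Matrix.mul_assoc]
    rw [e1, Matrix.trace_sub, Matrix.trace_smul]; simp
  have pos : 0 ≤ ((Zᴴ * (A * Z)).trace).re := by
    have h2 : (c:ℂ) • (Zᴴ * (A * Z)) = (A * Z)ᴴ * (A * Z) := by
      rw [Matrix.conjTranspose_mul, hAH]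
      calc (c:ℂ) • (Zᴴ * (A * Z)) = Zᴴ * (((c:ℂ) • A) * Z) := by
            simp [Matrix.mul_smul, Matrix.smul_mul]
        _ = Zᴴ * ((A * A) * Z) := by rw [hAA]
        _ = Zᴴ * A * (A * Z) := by simp [Matrix.mul_assoc]
    have h3 : (c:ℝ) * ((Zᴴ * (A * Z)).trace).re = (((A*Z)ᴴ * (A*Z)).trace).re := by
      rw [← h2, Matrix.trace_smul]
      simp [Complex.smul_re]
    nlinarith [trace_re_nonneg (A * Z), hc]
  have hre : ((Zᴴ * (A * Z)).trace).re
      = c * ((Zᴴ * Z).trace).re - (((X * Z)ᴴ * (X * Z)).trace).re := by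
    rw [key]
    simp [Complex.sub_re, Complex.mul_re]
  linarith [pos]

lemma complete (d : ℕ) (hd : 1 ≤ d)
    (W : Fin (d ^ 2) → Matrix (Fin d) (Fin d) ℂ)
    (hherm : ∀ k, (W k)ᴴ = W k)
    (horth : ∀ k l, (W k * W l).trace = if k = l then (d : ℂ) else 0) :
    ∀ a c a' c' : Fin d, ∑ k, (starRingEnd ℂ) (W k a c) * W k a' c'
      = if a = a' ∧ c = c' then (d : ℂ) else 0 := by
  have hdC : (d : ℂ) ≠ 0 := Nat.cast_ne_zero.mpr (by omega)
  have e : Fin (d ^ 2) ≃ (Fin d × Fin d) :=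
    Fintype.equivOfCardEq (by simp [sq])
  set V : Matrix (Fin d × Fin d) (Fin d × Fin d) ℂ :=
    fun i pq => W (e.symm i) pq.1 pq.2 with hV
  have conjW : ∀ k (p q : Fin d), (starRingEnd ℂ) (W k p q) = W k q p := by
    intro k p q
    have := congrFun (congrFun (hherm k) q) p
    simpa [Matrix.conjTranspose_apply] using this
  have h1 : V * Vᴴ = (d : ℂ) • 1 := by
    ext i j
    simp only [Matrix.mul_apply, Matrix.conjTranspose_apply, RCLike.star_def]
    simp only [hV]
    have step : ∑ pq : Fin d × Fin d,
        W (e.symm i) pq.1 pq.2 * (starRingEnd ℂ) (W (e.symm j) pq.1 pq.2)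
        = if i = j then (d:ℂ) else 0 := by
      calc ∑ pq : Fin d × Fin d, W (e.symm i) pq.1 pq.2 * (starRingEnd ℂ) (W (e.symm j) pq.1 pq.2)
          = ∑ pq : Fin d × Fin d, W (e.symm i) pq.1 pq.2 * W (e.symm j) pq.2 pq.1 := by
            apply Finset.sum_congr rfl; intro pq _; rw [conjW]
        _ = ∑ p : Fin d, ∑ q : Fin d, W (e.symm i) p q * W (e.symm j) q p := by
            rw [← Finset.sum_product']; rfl
        _ = (W (e.symm i) * W (e.symm j)).trace := by
            simp [Matrix.trace, Matrix.diag, Matrix.mul_apply]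
        _ = if i = j then (d:ℂ) else 0 := by
            rw [horth]
            simp [EmbeddingLike.apply_eq_iff_eq]
    rw [step]
    by_cases h : i = j <;> simp [h, Matrix.smul_apply, Matrix.one_apply]
  have h2 : Vᴴ * V = (d : ℂ) • 1 := by
    have hinv : V * ((d:ℂ)⁻¹ • Vᴴ) = 1 := by
      rw [Matrix.mul_smul, h1, smul_smul, inv_mul_cancel₀ hdC, one_smul]
    have h3 := mul_eq_one_comm.mp hinv
    calc Vᴴ * V = (d:ℂ) • (((d:ℂ)⁻¹ • Vᴴ) * V) := by
          rw [Matrix.smul_mul, smul_smul, mul_inv_cancel₀ hdC, one_smul]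
      _ = (d:ℂ) • (1 : Matrix (Fin d × Fin d) (Fin d × Fin d) ℂ) := by rw [h3]
  intro a c a' c'
  have h4 := congrFun (congrFun h2 (a, c)) (a', c')
  simp only [Matrix.mul_apply, Matrix.conjTranspose_apply, RCLike.star_def,
    Matrix.smul_apply, Matrix.one_apply] at h4
  simp only [hV] at h4
  rw [Equiv.sum_comp e.symm (fun k => (starRingEnd ℂ) (W k a c) * W k a' c')] at h4
  rw [h4]
  by_cases h : (a,c) = (a',c') <;> simp_all [Prod.ext_iff]

variable {d : ℕ} {W : Fin (d ^ 2) → Matrix (Fin d) (Fin d) ℂ}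

lemma sumk (hcomp : ∀ a c a' c' : Fin d, ∑ k, W k a c * (starRingEnd ℂ) (W k a' c')
      = if a = a' ∧ c = c' then (d : ℂ) else 0)
    (a a' : Fin d) (u v : Fin d → ℂ) :
    ∑ k, (∑ c, W k a c * u c) * (starRingEnd ℂ) (∑ c', W k a' c' * v c')
      = if a = a' then (d:ℂ) * ∑ c, u c * (starRingEnd ℂ) (v c) else 0 := by
  have e1 : ∀ k : Fin (d^2), (∑ c, W k a c * u c) * (starRingEnd ℂ) (∑ c', W k a' c' * v c')
      = ∑ c, ∑ c', (u c * (starRingEnd ℂ) (v c')) * (W k a c * (starRingEnd ℂ) (W k a' c')) := by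
    intro k
    rw [map_sum, Finset.sum_mul_sum]
    apply Finset.sum_congr rfl; intro c _
    apply Finset.sum_congr rfl; intro c' _
    rw [_root_.map_mul]; ring
  rw [Finset.sum_congr rfl (fun k _ => e1 k), Finset.sum_comm]
  have e2 : ∀ c, ∑ k, ∑ c', (u c * (starRingEnd ℂ) (v c')) * (W k a c * (starRingEnd ℂ) (W k a' c'))
      = ∑ c', (u c * (starRingEnd ℂ) (v c')) * (if a = a' ∧ c = c' then (d : ℂ) else 0) := by
    intro c
    rw [Finset.sum_comm]
    exact Finset.sum_congr rfl fun c' _ => by rw [← Finset.mul_sum, hcomp]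
  rw [Finset.sum_congr rfl (fun c _ => e2 c)]
  by_cases h : a = a'
  · simp only [h, true_and, Finset.mul_sum]
    apply Finset.sum_congr rfl; intro c _
    simp [Finset.sum_ite_eq' Finset.univ c]
    ring
  · simp [h]

lemma sumk' (hcomp : ∀ a c a' c' : Fin d, ∑ k, W k a c * (starRingEnd ℂ) (W k a' c')
      = if a = a' ∧ c = c' then (d : ℂ) else 0)
    (b b' : Fin d) (u v : Fin d → ℂ) :
    ∑ k, (∑ c, u c * W k c b) * (starRingEnd ℂ) (∑ c', v c' * W k c' b')
      = if b = b' then (d:ℂ) * ∑ c, u c * (starRingEnd ℂ) (v c) else 0 := by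
  have e1 : ∀ k : Fin (d^2), (∑ c, u c * W k c b) * (starRingEnd ℂ) (∑ c', v c' * W k c' b')
      = ∑ c, ∑ c', (u c * (starRingEnd ℂ) (v c')) * (W k c b * (starRingEnd ℂ) (W k c' b')) := by
    intro k
    rw [map_sum, Finset.sum_mul_sum]
    apply Finset.sum_congr rfl; intro c _
    apply Finset.sum_congr rfl; intro c' _
    rw [_root_.map_mul]; ring
  rw [Finset.sum_congr rfl (fun k _ => e1 k), Finset.sum_comm]
  have e2 : ∀ c, ∑ k, ∑ c', (u c * (starRingEnd ℂ) (v c')) * (W k c b * (starRingEnd ℂ) (W k c' b'))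
      = ∑ c', (u c * (starRingEnd ℂ) (v c')) * (if c = c' ∧ b = b' then (d : ℂ) else 0) := by
    intro c
    rw [Finset.sum_comm]
    exact Finset.sum_congr rfl fun c' _ => by rw [← Finset.mul_sum, hcomp]
  rw [Finset.sum_congr rfl (fun c _ => e2 c)]
  by_cases h : b = b'
  · simp only [h, and_true, Finset.mul_sum]
    apply Finset.sum_congr rfl; intro c _
    simp [Finset.sum_ite_eq' Finset.univ c]
    ring
  · simp [h]

lemma frameEntry (hcomp : ∀ a c a' c' : Fin d, ∑ k, W k a c * (starRingEnd ℂ) (W k a' c')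
      = if a = a' ∧ c = c' then (d : ℂ) else 0)
    (T : Matrix (Fin d) (Fin d) ℂ) (a b a' b' : Fin d) :
    ∑ α : Fin (d^2) × Fin (d^2),
        (W α.1 * T * W α.2) a b * (starRingEnd ℂ) ((W α.1 * T * W α.2) a' b')
      = if a = a' ∧ b = b'
        then (d:ℂ)^2 * ∑ i, ∑ j, (Complex.normSq (T i j) : ℂ) else 0 := by
  rw [Fintype.sum_prod_type]
  have step1 : ∀ k, ∑ l, (W k * T * W l) a b * (starRingEnd ℂ) ((W k * T * W l) a' b')
      = if b = b' then (d:ℂ) * ∑ e, (W k * T) a e * (starRingEnd ℂ) ((W k * T) a' e)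
        else 0 := by
    intro k
    have h := sumk' hcomp b b' (fun e => (W k * T) a e) (fun e => (W k * T) a' e)
    calc ∑ l, (W k * T * W l) a b * (starRingEnd ℂ) ((W k * T * W l) a' b')
        = ∑ l, (∑ e, (W k * T) a e * W l e b) *
            (starRingEnd ℂ) (∑ e', (W k * T) a' e' * W l e' b') := by
          apply Finset.sum_congr rfl; intro l _
          rw [Matrix.mul_apply, Matrix.mul_apply]
      _ = if b = b' then (d:ℂ) * ∑ e, (W k * T) a e * (starRingEnd ℂ) ((W k * T) a' e)
          else 0 := h
  rw [Finset.sum_congr rfl (fun k _ => step1 k)]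
  by_cases hb : b = b'
  · simp only [hb, if_true, ← Finset.mul_sum]
    rw [Finset.sum_comm]
    have step2 : ∀ e, ∑ k, (W k * T) a e * (starRingEnd ℂ) ((W k * T) a' e)
        = if a = a' then (d:ℂ) * ∑ c, T c e * (starRingEnd ℂ) (T c e) else 0 := by
      intro e
      have h := sumk hcomp a a' (fun c => T c e) (fun c => T c e)
      calc ∑ k, (W k * T) a e * (starRingEnd ℂ) ((W k * T) a' e)
          = ∑ k, (∑ c, W k a c * T c e) * (starRingEnd ℂ) (∑ c', W k a' c' * T c' e) := by
            apply Finset.sum_congr rfl; intro kk _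
            rw [Matrix.mul_apply, Matrix.mul_apply]
        _ = _ := h
    rw [Finset.sum_congr rfl (fun e _ => step2 e)]
    by_cases ha : a = a'
    · simp only [ha, if_true, and_true, true_and, ← Finset.mul_sum]
      rw [Finset.sum_comm]
      simp only [Complex.mul_conj]
      ring
    · simp [ha]
  · simp [hb]

lemma uinv_sum {U V A : Matrix (Fin d) (Fin d) ℂ}
    (hU : Uᴴ * U = 1) (hV : V * Vᴴ = 1) :
    ∑ p, ∑ q, Complex.normSq ((U * A * V) p q) = ∑ p, ∑ q, Complex.normSq (A p q) := by
  rw [← trace_re_eq, ← trace_re_eq]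
  congr 1
  calc ((U * A * V)ᴴ * (U * A * V)).trace
      = (Vᴴ * (Aᴴ * ((Uᴴ * U) * (A * V)))).trace := by
        simp only [Matrix.conjTranspose_mul, Matrix.mul_assoc]
    _ = (Vᴴ * ((Aᴴ * A) * V)).trace := by rw [hU]; simp only [Matrix.one_mul, Matrix.mul_assoc]
    _ = (((Aᴴ * A) * V) * Vᴴ).trace := by rw [Matrix.trace_mul_comm]
    _ = ((Aᴴ * A) * (V * Vᴴ)).trace := by simp only [Matrix.mul_assoc]
    _ = (Aᴴ * A).trace := by rw [hV, Matrix.mul_one]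

lemma sum_prod3 {γ : Type*} [Fintype γ] (A B C : γ → ℝ) :
    ∑ u : γ × γ × γ, A u.1 * (B u.2.1 * C u.2.2)
      = (∑ p, A p) * ((∑ p, B p) * (∑ p, C p)) := by
  rw [Fintype.sum_prod_type]
  have h1 : ∀ a, ∑ v : γ × γ, A a * (B v.1 * C v.2)
      = A a * ((∑ p, B p) * (∑ p, C p)) := by
    intro a
    rw [← Finset.mul_sum]
    congr 1
    rw [Fintype.sum_prod_type]
    exact (Finset.sum_mul_sum _ _ _ _).symm
  rw [Finset.sum_congr rfl fun a _ => h1 a, ← Finset.sum_mul]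

end Stmt12Aux

open Stmt12Aux

theorem stmt12 (d : ℕ) (hd : 1 ≤ d)
    (W : Fin (d ^ 2) → Matrix (Fin d) (Fin d) ℂ)
    (hherm : ∀ k, (W k)ᴴ = W k)
    (hunit : ∀ k, W k ∈ Matrix.unitaryGroup (Fin d) ℂ)
    (horth : ∀ k l, (W k * W l).trace = if k = l then (d : ℂ) else 0)
    (T₁ T₂ T₃ T₄ : Matrix (Fin d) (Fin d) ℂ) :
    fnorm
      ((((d : ℂ) ^ 2)⁻¹ • ∑ k, (W k ⊗ₖ W k) ⊗ₖ (W k ⊗ₖ W k)) *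
        ((T₁ ⊗ₖ T₂) ⊗ₖ (T₃ ⊗ₖ T₄)) *
        (((d : ℂ) ^ 2)⁻¹ • ∑ k, (W k ⊗ₖ W k) ⊗ₖ (W k ⊗ₖ W k)))
      ≤ (d : ℝ)⁻¹ * (fnorm T₁ * fnorm T₂ * fnorm T₃ * fnorm T₄) := by
  classical
  have hd0 : 0 < d := by omega
  have hdR : (0:ℝ) < (d:ℝ) := by exact_mod_cast hd0
  have hcomp : ∀ a c a' c' : Fin d, ∑ k, W k a c * (starRingEnd ℂ) (W k a' c')
      = if a = a' ∧ c = c' then (d : ℂ) else 0 := by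
    intro a c a' c'
    have h := complete d hd W hherm horth a' c' a c
    have h2 : ∑ k, W k a c * (starRingEnd ℂ) (W k a' c')
        = ∑ k, (starRingEnd ℂ) (W k a' c') * W k a c :=
      Finset.sum_congr rfl fun k _ => mul_comm _ _
    rw [h2, h]
    by_cases hx : a = a' <;> by_cases hy : c = c' <;> simp [hx, hy, eq_comm]
  set f : Matrix (Fin d) (Fin d) ℂ → ℝ := fun T => ∑ i, ∑ j, Complex.normSq (T i j) with hf
  have fnn : ∀ T, 0 ≤ f T := fun T =>
    Finset.sum_nonneg fun i _ => Finset.sum_nonneg fun j _ => Complex.normSq_nonneg _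
  have hfnorm : ∀ T : Matrix (Fin d) (Fin d) ℂ, fnorm T = Real.sqrt (f T) := by
    intro T; rw [fnorm, trace_re_eq]
  by_cases hT1 : T₁ = 0
  · have h0 : fnorm (0 : Matrix (Fin d) (Fin d) ℂ) = 0 := by simp [fnorm]
    rw [hT1]
    simp only [Matrix.zero_kronecker, Matrix.mul_zero, Matrix.zero_mul, h0, zero_mul]
    simp [fnorm]
  -- main case
  have hfT1 : 0 < f T₁ := by
    obtain ⟨i, j, hij⟩ : ∃ i j, T₁ i j ≠ 0 := by
      by_contra hcon; push_neg at hcon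
      exact hT1 (by ext i j; simpa using hcon i j)
    have h1 : 0 < Complex.normSq (T₁ i j) := Complex.normSq_pos.mpr hij
    calc (0:ℝ) < Complex.normSq (T₁ i j) := h1
      _ ≤ ∑ j', Complex.normSq (T₁ i j') :=
          Finset.single_le_sum (fun _ _ => Complex.normSq_nonneg _) (Finset.mem_univ j)
      _ ≤ f T₁ :=
          Finset.single_le_sum (f := fun i' => ∑ j', Complex.normSq (T₁ i' j'))
            (fun _ _ => Finset.sum_nonneg fun _ _ => Complex.normSq_nonneg _)
            (Finset.mem_univ i)
  have hc : 0 < (d:ℝ)^2 * f T₁ := by positivity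
  set c₀ : ℂ := ((d:ℂ)^2)⁻¹ with hc₀
  set S := ∑ k, (W k ⊗ₖ W k) ⊗ₖ (W k ⊗ₖ W k) with hS
  set X : Matrix (Fin d × Fin d) (Fin (d^2) × Fin (d^2)) ℂ :=
    fun p α => (W α.1 * T₁ * W α.2) p.1 p.2 with hX
  set Z : Matrix (Fin (d^2) × Fin (d^2))
      ((Fin d × Fin d) × (Fin d × Fin d) × (Fin d × Fin d)) ℂ :=
    fun α u => (W α.1 * T₂ * W α.2) u.1.1 u.1.2 *
      ((W α.1 * T₃ * W α.2) u.2.1.1 u.2.1.2 * (W α.1 * T₄ * W α.2) u.2.2.1 u.2.2.2) with hZ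
  have hXX : X * Xᴴ = ((((d:ℝ)^2 * f T₁ : ℝ) : ℂ)) • 1 := by
    ext p q
    rw [Matrix.mul_apply]
    simp only [Matrix.conjTranspose_apply, RCLike.star_def]
    simp only [hX]
    rw [frameEntry hcomp T₁ p.1 p.2 q.1 q.2]
    have hcast : ((((d:ℝ)^2 * f T₁ : ℝ)) : ℂ)
        = (d:ℂ)^2 * ∑ i, ∑ j, (Complex.normSq (T₁ i j) : ℂ) := by
      rw [hf]; push_cast; ring
    rw [Matrix.smul_apply, Matrix.one_apply]
    by_cases h : p = q
    · have h2 : p.1 = q.1 ∧ p.2 = q.2 := ⟨congrArg Prod.fst h, congrArg Prod.snd h⟩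
      simp [h, h2, hcast]
    · have h2 : ¬(p.1 = q.1 ∧ p.2 = q.2) := fun hh => h (Prod.ext hh.1 hh.2)
      simp [h, h2]
  have hcore := core X Z ((d:ℝ)^2 * f T₁) hc hXX
  have hWU : ∀ k, (W k)ᴴ * W k = 1 := by
    intro k
    have h := hunit k
    rw [Matrix.mem_unitaryGroup_iff'] at h
    rwa [Matrix.star_eq_conjTranspose] at h
  have hWV : ∀ k, W k * (W k)ᴴ = 1 := by
    intro k
    have h := hunit k
    rw [Matrix.mem_unitaryGroup_iff] at h
    rwa [Matrix.star_eq_conjTranspose] at h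
  have hfW : ∀ (k l : Fin (d^2)) (T : Matrix (Fin d) (Fin d) ℂ),
      (∑ p : Fin d × Fin d, Complex.normSq ((W k * T * W l) p.1 p.2)) = f T := by
    intro k l T
    rw [Fintype.sum_prod_type, uinv_sum (hWU k) (hWV l), hf]
  have hZtr : ((Zᴴ * Z).trace).re = ((d:ℝ)^2)^2 * (f T₂ * (f T₃ * f T₄)) := by
    rw [trace_re_eq]
    have hrow : ∀ α : Fin (d^2) × Fin (d^2),
        ∑ u, Complex.normSq (Z α u) = f T₂ * (f T₃ * f T₄) := by
      intro α
      have h1 : ∀ u : (Fin d × Fin d) × (Fin d × Fin d) × (Fin d × Fin d),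
          Complex.normSq (Z α u)
          = Complex.normSq ((W α.1 * T₂ * W α.2) u.1.1 u.1.2) *
            (Complex.normSq ((W α.1 * T₃ * W α.2) u.2.1.1 u.2.1.2) *
             Complex.normSq ((W α.1 * T₄ * W α.2) u.2.2.1 u.2.2.2)) := by
        intro u; rw [hZ]; simp [Complex.normSq_mul]
      calc ∑ u, Complex.normSq (Z α u)
          = ∑ u : (Fin d × Fin d) × (Fin d × Fin d) × (Fin d × Fin d),
            Complex.normSq ((W α.1 * T₂ * W α.2) u.1.1 u.1.2) *
              (Complex.normSq ((W α.1 * T₃ * W α.2) u.2.1.1 u.2.1.2) *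
               Complex.normSq ((W α.1 * T₄ * W α.2) u.2.2.1 u.2.2.2)) :=
            Finset.sum_congr rfl fun u _ => h1 u
        _ = (∑ p : Fin d × Fin d, Complex.normSq ((W α.1 * T₂ * W α.2) p.1 p.2)) *
            ((∑ p : Fin d × Fin d, Complex.normSq ((W α.1 * T₃ * W α.2) p.1 p.2)) *
             (∑ p : Fin d × Fin d, Complex.normSq ((W α.1 * T₄ * W α.2) p.1 p.2))) :=
            sum_prod3 (fun p : Fin d × Fin d => Complex.normSq ((W α.1 * T₂ * W α.2) p.1 p.2))
              (fun p => Complex.normSq ((W α.1 * T₃ * W α.2) p.1 p.2))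
              (fun p => Complex.normSq ((W α.1 * T₄ * W α.2) p.1 p.2))
        _ = f T₂ * (f T₃ * f T₄) := by rw [hfW, hfW, hfW]
    rw [Finset.sum_congr rfl fun α _ => hrow α, Finset.sum_const, Finset.card_univ]
    simp only [Fintype.card_prod, Fintype.card_fin, nsmul_eq_mul]
    push_cast
    ring
  have hM : ∀ k l : Fin (d^2),
      ((W k ⊗ₖ W k) ⊗ₖ (W k ⊗ₖ W k)) * ((T₁ ⊗ₖ T₂) ⊗ₖ (T₃ ⊗ₖ T₄)) *
        ((W l ⊗ₖ W l) ⊗ₖ (W l ⊗ₖ W l))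
      = ((W k * T₁ * W l) ⊗ₖ (W k * T₂ * W l)) ⊗ₖ
          ((W k * T₃ * W l) ⊗ₖ (W k * T₄ * W l)) := by
    intro k l
    simp only [Matrix.mul_kronecker_mul]
  have hL : c₀ • S * ((T₁ ⊗ₖ T₂) ⊗ₖ (T₃ ⊗ₖ T₄)) * (c₀ • S)
      = (c₀ * c₀) • ∑ k, ∑ l,
          ((W k * T₁ * W l) ⊗ₖ (W k * T₂ * W l)) ⊗ₖ
            ((W k * T₃ * W l) ⊗ₖ (W k * T₄ * W l)) := by
    rw [Matrix.smul_mul, Matrix.smul_mul, Matrix.mul_smul, smul_smul]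
    congr 1
    rw [hS, Matrix.sum_mul, Matrix.sum_mul]
    refine Finset.sum_congr rfl fun k _ => ?_
    rw [Matrix.mul_sum]
    exact Finset.sum_congr rfl fun l _ => hM k l
  have hentry : ∀ a1 a2 a3 a4 b1 b2 b3 b4 : Fin d,
      (c₀ • S * ((T₁ ⊗ₖ T₂) ⊗ₖ (T₃ ⊗ₖ T₄)) * (c₀ • S)) ((a1,a2),(a3,a4)) ((b1,b2),(b3,b4))
      = (c₀ * c₀) * ((X * Z) (a1,b1) ((a2,b2),(a3,b3),(a4,b4))) := by
    intro a1 a2 a3 a4 b1 b2 b3 b4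
    rw [hL, Matrix.smul_apply, smul_eq_mul]
    congr 1
    rw [Matrix.sum_apply, Matrix.mul_apply, Fintype.sum_prod_type]
    refine Finset.sum_congr rfl fun k _ => ?_
    rw [Matrix.sum_apply]
    refine Finset.sum_congr rfl fun l _ => ?_
    simp only [Matrix.kroneckerMap_apply, hX, hZ]
    ring
  have hsum : ∑ I : (Fin d × Fin d) × (Fin d × Fin d), ∑ J : (Fin d × Fin d) × (Fin d × Fin d),
        Complex.normSq ((c₀ • S * ((T₁ ⊗ₖ T₂) ⊗ₖ (T₃ ⊗ₖ T₄)) * (c₀ • S)) I J)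
      = Complex.normSq (c₀ * c₀) *
        ∑ p : Fin d × Fin d,
        ∑ u : (Fin d × Fin d) × (Fin d × Fin d) × (Fin d × Fin d),
          Complex.normSq ((X * Z) p u) := by
    rw [← Fintype.sum_prod_type', ← Fintype.sum_prod_type', Finset.mul_sum]
    refine Fintype.sum_equiv
      ⟨fun x => ((x.1.1.1, x.2.1.1), ((x.1.1.2, x.2.1.2), ((x.1.2.1, x.2.2.1), (x.1.2.2, x.2.2.2)))),
       fun y => (((y.1.1, y.2.1.1), (y.2.2.1.1, y.2.2.2.1)), ((y.1.2, y.2.1.2), (y.2.2.1.2, y.2.2.2.2))),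
       ?_, ?_⟩ _ _ ?_
    · rintro ⟨⟨⟨a1,a2⟩,⟨a3,a4⟩⟩,⟨⟨b1,b2⟩,⟨b3,b4⟩⟩⟩; rfl
    · rintro ⟨⟨a1,b1⟩,⟨⟨a2,b2⟩,⟨⟨a3,b3⟩,⟨a4,b4⟩⟩⟩⟩; rfl
    · rintro ⟨⟨⟨a1,a2⟩,⟨a3,a4⟩⟩,⟨⟨b1,b2⟩,⟨b3,b4⟩⟩⟩
      simp only [Equiv.coe_fn_mk]
      rw [hentry a1 a2 a3 a4 b1 b2 b3 b4, Complex.normSq_mul]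
  have hd2 : ((d:ℝ)^2) ≠ 0 := by positivity
  have hnc : Complex.normSq (c₀ * c₀) = (((d:ℝ)^2)^4)⁻¹ := by
    have hor : c₀ = ((((d:ℝ)^2)⁻¹ : ℝ) : ℂ) := by rw [hc₀]; push_cast; ring
    rw [hor, ← Complex.ofReal_mul, Complex.normSq_ofReal]
    field_simp
  have hbound : ∑ I : (Fin d × Fin d) × (Fin d × Fin d),
      ∑ J : (Fin d × Fin d) × (Fin d × Fin d),
        Complex.normSq ((c₀ • S * ((T₁ ⊗ₖ T₂) ⊗ₖ (T₃ ⊗ₖ T₄)) * (c₀ • S)) I J)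
      ≤ ((d:ℝ)^2)⁻¹ * (f T₁ * (f T₂ * (f T₃ * f T₄))) := by
    rw [hsum, ← trace_re_eq]
    have h1 : (((X * Z)ᴴ * (X * Z)).trace).re
        ≤ ((d:ℝ)^2 * f T₁) * (((d:ℝ)^2)^2 * (f T₂ * (f T₃ * f T₄))) := by
      calc (((X * Z)ᴴ * (X * Z)).trace).re
          ≤ ((d:ℝ)^2 * f T₁) * ((Zᴴ * Z).trace).re := hcore
        _ = ((d:ℝ)^2 * f T₁) * (((d:ℝ)^2)^2 * (f T₂ * (f T₃ * f T₄))) := by rw [hZtr]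
    calc Complex.normSq (c₀ * c₀) * (((X * Z)ᴴ * (X * Z)).trace).re
        ≤ Complex.normSq (c₀ * c₀) *
            (((d:ℝ)^2 * f T₁) * (((d:ℝ)^2)^2 * (f T₂ * (f T₃ * f T₄)))) :=
          mul_le_mul_of_nonneg_left h1 (Complex.normSq_nonneg _)
      _ = ((d:ℝ)^2)⁻¹ * (f T₁ * (f T₂ * (f T₃ * f T₄))) := by
          rw [hnc]
          field_simp
  have hrhs : (d:ℝ)⁻¹ * (Real.sqrt (f T₁) * Real.sqrt (f T₂) * Real.sqrt (f T₃) * Real.sqrt (f T₄))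
      = Real.sqrt (((d:ℝ)^2)⁻¹ * (f T₁ * (f T₂ * (f T₃ * f T₄)))) := by
    rw [Real.sqrt_mul (by positivity : (0:ℝ) ≤ ((d:ℝ)^2)⁻¹),
        Real.sqrt_mul (fnn T₁), Real.sqrt_mul (fnn T₂), Real.sqrt_mul (fnn T₃),
        Real.sqrt_inv, Real.sqrt_sq hdR.le]
    ring
  calc fnorm (c₀ • S * ((T₁ ⊗ₖ T₂) ⊗ₖ (T₃ ⊗ₖ T₄)) * (c₀ • S))
      = Real.sqrt (∑ I : (Fin d × Fin d) × (Fin d × Fin d),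
          ∑ J : (Fin d × Fin d) × (Fin d × Fin d),
          Complex.normSq ((c₀ • S * ((T₁ ⊗ₖ T₂) ⊗ₖ (T₃ ⊗ₖ T₄)) * (c₀ • S)) I J)) := by
        rw [fnorm, trace_re_eq]
    _ ≤ Real.sqrt (((d:ℝ)^2)⁻¹ * (f T₁ * (f T₂ * (f T₃ * f T₄)))) := Real.sqrt_le_sqrt hbound
    _ = (d:ℝ)⁻¹ * (Real.sqrt (f T₁) * Real.sqrt (f T₂) * Real.sqrt (f T₃) * Real.sqrt (f T₄)) :=
        hrhs.symm
    _ = (d:ℝ)⁻¹ * (fnorm T₁ * fnorm T₂ * fnorm T₃ * fnorm T₄) := by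
        rw [hfnorm T₁, hfnorm T₂, hfnorm T₃, hfnorm T₄]


end
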